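/- Let β' and β be elements of Φ ∪ {0} with β' < β such that no element of Φ lies strictly between β' and β. Then for every v ∈ J there is no integer m with β'·v < m < β·v. -/

import Mathlib

/-- If `β' < β` are elements of `Φ ∪ {0}` with no element of `Φ`
strictly between them, then for every `v ∈ J` there is no integer `m` with
`β'·v < m < β·v`. -/
theorem stmt_1 (J : Finset ℕ) (hJne : J.Nonempty) (hJpos : ∀ v ∈ J, 0 < v)
    (Φ : Set ℚ)
    (hΦ : Φ = {β : ℚ | 0 < β ∧ β ≤ 1 ∧ ∃ v ∈ J, ∃ m : ℤ, (v : ℚ) * β = m})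
    (β' β : ℚ) (hβ' : β' ∈ Φ ∪ {0}) (hβ : β ∈ Φ ∪ {0}) (hlt : β' < β)
    (hcons : ∀ γ ∈ Φ, ¬(β' < γ ∧ γ < β)) :
    ∀ v ∈ J, ¬ ∃ m : ℤ, β' * (v : ℚ) < (m : ℚ) ∧ (m : ℚ) < β * (v : ℚ) := by
  rintro v hv ⟨m, hm1, hm2⟩
  have hvpos : (0 : ℚ) < (v : ℚ) := by exact_mod_cast hJpos v hv
  have hβ'0 : (0 : ℚ) ≤ β' := by
    rcases hβ' with h | h
    · rw [hΦ] at h; exact le_of_lt h.1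
    · simp at h; simp [h]
  have hβΦ : β ∈ Φ := by
    rcases hβ with h | h
    · exact h
    · simp at h; subst h; linarith
  have hβ1 : β ≤ 1 := by rw [hΦ] at hβΦ; exact hβΦ.2.1
  set γ : ℚ := (m : ℚ) / (v : ℚ) with hγ
  have hmpos : (0 : ℚ) < (m : ℚ) := by nlinarith
  have hγpos : 0 < γ := div_pos hmpos hvpos
  have h1 : β' < γ := by rw [hγ, lt_div_iff₀ hvpos]; linarith
  have h2 : γ < β := by rw [hγ, div_lt_iff₀ hvpos]; linarith
  have hγΦ : γ ∈ Φ := by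
    rw [hΦ]
    refine ⟨hγpos, by linarith, v, hv, m, ?_⟩
    rw [hγ]; field_simp [hvpos.ne']
  exact hcons γ hγΦ ⟨h1, h2⟩
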